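/- Let R be a commutative ring and u ∈ R. Define u_0 = 1, u_1 = u, u_2 = u^2 - 2, u_{n+1} = u_1 u_n - u_{n-1} for n ≥ 2. Suppose (x_m)_{m∈ℤ} is a family of elements of R satisfying both: (a) u · x_m = x_{m-2} + x_{m+2} for all m ∈ ℤ, and (b) x_m x_{m+3} = x_{m+1} x_{m+2} + 1 for all m ∈ ℤ. Then for all m ∈ ℤ and all n ≥ 0: x_m x_{m+2n+3} = x_{m+n+1} x_{m+n+2} + Σ_{l=0}^{⌊n/2⌋} (l+1) u_{n-2l} + Σ_{l=0}^{⌊(n-1)/2⌋} (l+1) u_{n-1-2l} (the second sum being empty for n = 0). -/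

import Mathlib

/-- The normalized Chebyshev-like sequence associated with elements `u, t`:
`u₀ = 1`, `u₁ = u`, `u₂ = u² - 2t`, `u_{n+1} = u₁ uₙ - t u_{n-1}` for `n ≥ 2`. -/
def cheb {A : Type*} [Ring A] (u t : A) : ℕ → A
  | 0 => 1
  | 1 => u
  | 2 => u ^ 2 - 2 * t
  | n + 3 => u * cheb u t (n + 2) - t * cheb u t (n + 1)

section Aux
variable {R : Type*} [CommRing R]

def chA (u : R) (n : ℕ) : R :=
  ∑ l ∈ Finset.range (n / 2 + 1), ((l : R) + 1) * cheb u 1 (n - 2 * l)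

def chB (u : R) (n : ℕ) : R :=
  ∑ l ∈ Finset.range (n / 2 + 1), cheb u 1 (n - 2 * l)

def chS (u : R) (n : ℕ) : R :=
  ∑ l ∈ Finset.range ((n + 1) / 2), ((l : R) + 1) * cheb u 1 (n - 1 - 2 * l)

lemma cheb_mul (u : R) (n : ℕ) :
    u * cheb u 1 (n + 3) = cheb u 1 (n + 4) + cheb u 1 (n + 2) := by
  have h : cheb u 1 (n + 4) = u * cheb u 1 (n + 3) - 1 * cheb u 1 (n + 2) := by
    rw [show n + 4 = (n + 1) + 3 by omega]
    rw [cheb]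
  rw [h]; ring

lemma chB_step (u : R) (n : ℕ) : chB u (n + 2) = chB u n + cheb u 1 (n + 2) := by
  unfold chB
  rw [show (n + 2) / 2 + 1 = (n / 2 + 1) + 1 by omega, Finset.sum_range_succ']
  congr 1
  exact Finset.sum_congr rfl fun l _ => by congr 1; omega

lemma chA_step (u : R) (n : ℕ) :
    chA u (n + 2) = chA u n + chB u n + cheb u 1 (n + 2) := by
  unfold chA chB
  rw [show (n + 2) / 2 + 1 = (n / 2 + 1) + 1 by omega, Finset.sum_range_succ']
  rw [← Finset.sum_add_distrib]
  congr 1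
  · refine Finset.sum_congr rfl fun l _ => ?_
    rw [show n + 2 - 2 * (l + 1) = n - 2 * l by omega]
    push_cast
    ring
  · norm_num

lemma chB_rec (u : R) : ∀ n, u * chB u (n + 1) = chB u (n + 2) + chB u n := by
  intro n
  induction n using Nat.twoStepInduction with
  | zero => simp [chB, Finset.sum_range_succ, cheb]; ring
  | one => simp [chB, Finset.sum_range_succ, cheb]; ring
  | more n ih _ =>
    linear_combination u * chB_step u (n + 1) + ih - chB_step u (n + 2)
      - chB_step u n + cheb_mul u n

lemma chL (u : R) : ∀ n, u * (chA u (n + 2) + chA u (n + 1)) + 1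
    = chA u (n + 3) + chA u (n + 2) + chA u (n + 1) + chA u n := by
  intro n
  induction n with
  | zero => simp [chA, Finset.sum_range_succ, cheb]; ring
  | succ n ih =>
    have e1 : n + 1 + 2 = n + 3 := by omega
    have e2 : n + 1 + 1 = n + 2 := by omega
    have e3 : n + 1 + 3 = n + 4 := by omega
    rw [e1, e2, e3]
    linear_combination ih + u * chA_step u (n + 1) - chA_step u (n + 2)
      - chA_step u n + chB_rec u n + cheb_mul u n

lemma chS_eq (u : R) (n : ℕ) : chS u (n + 1) = chA u n := by
  unfold chS chA
  refine Finset.sum_congr (by congr 1; omega) fun l _ => by rw [Nat.add_sub_cancel]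

lemma SrecA (u : R) : ∀ n, chA u (n + 2) + chS u (n + 2)
    = u * (chA u (n + 1) + chS u (n + 1)) - (chA u n + chS u n) + 1 := by
  intro n
  match n with
  | 0 => simp [chA, chS, Finset.sum_range_succ, cheb]; ring
  | (k + 1) =>
    rw [show k + 1 + 2 = k + 2 + 1 by omega, show k + 1 + 1 = k + 1 + 1 from rfl]
    rw [chS_eq, chS_eq, chS_eq]
    rw [show k + 2 + 1 = k + 3 by omega, show k + 1 + 1 = k + 2 by omega]
    linear_combination -chL u k

lemma Srec (u : R) (n : ℕ) :
    (∑ l ∈ Finset.range ((n + 2) / 2 + 1), ((l : R) + 1) * cheb u 1 (n + 2 - 2 * l))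
      + (∑ l ∈ Finset.range ((n + 2 + 1) / 2), ((l : R) + 1) * cheb u 1 (n + 2 - 1 - 2 * l))
    = u * ((∑ l ∈ Finset.range ((n + 1) / 2 + 1), ((l : R) + 1) * cheb u 1 (n + 1 - 2 * l))
        + (∑ l ∈ Finset.range ((n + 1 + 1) / 2), ((l : R) + 1) * cheb u 1 (n + 1 - 1 - 2 * l)))
      - ((∑ l ∈ Finset.range (n / 2 + 1), ((l : R) + 1) * cheb u 1 (n - 2 * l))
        + (∑ l ∈ Finset.range ((n + 1) / 2), ((l : R) + 1) * cheb u 1 (n - 1 - 2 * l)))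
      + 1 :=
  SrecA u n

end Aux

/-- in a commutative ring, with the Chebyshev-like sequence with
parameter `t = 1`, if a family `(xₘ)_{m ∈ ℤ}` satisfies
(a) `u · xₘ = x_{m-2} + x_{m+2}` and (b) `xₘ x_{m+3} = x_{m+1} x_{m+2} + 1`
for all `m ∈ ℤ`, then for all `m ∈ ℤ` and `n ≥ 0`:
`xₘ x_{m+2n+3} = x_{m+n+1} x_{m+n+2} + ∑_{l=0}^{⌊n/2⌋} (l+1) u_{n-2l}
  + ∑_{l=0}^{⌊(n-1)/2⌋} (l+1) u_{n-1-2l}`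
(the second sum being empty when `n = 0`). -/
theorem cluster_multiplication_formula_q1 {R : Type*} [CommRing R] (u : R)
    (x : ℤ → R)
    (ha : ∀ m : ℤ, u * x m = x (m - 2) + x (m + 2))
    (hb : ∀ m : ℤ, x m * x (m + 3) = x (m + 1) * x (m + 2) + 1) :
    ∀ (m : ℤ) (n : ℕ),
      x m * x (m + 2 * (n : ℤ) + 3)
        = x (m + (n : ℤ) + 1) * x (m + (n : ℤ) + 2)
          + (∑ l ∈ Finset.range (n / 2 + 1), ((l : R) + 1) * cheb u 1 (n - 2 * l))
          + ∑ l ∈ Finset.range ((n + 1) / 2), ((l : R) + 1) * cheb u 1 (n - 1 - 2 * l) := by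

  have ha' : ∀ k : ℤ, x (k + 4) = u * x (k + 2) - x k := by
    intro k
    have h := ha (k + 2)
    rw [show k + 2 - 2 = k by ring, show k + 2 + 2 = k + 4 by ring] at h
    linear_combination -h
  intro m n
  induction n using Nat.twoStepInduction generalizing m with
  | zero =>
    simpa [cheb] using hb m
  | one =>
    have h1 : x (m + 5) = u * x (m + 3) - x (m + 1) := by
      have h := ha' (m + 1)
      rw [show m + 1 + 4 = m + 5 by ring, show m + 1 + 2 = m + 3 by ring] at h
      exact h
    have hb1 : x (m + 1) * x (m + 4) = x (m + 2) * x (m + 3) + 1 := by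
      have h := hb (m + 1)
      rw [show m + 1 + 3 = m + 4 by ring, show m + 1 + 1 = m + 2 by ring,
        show m + 1 + 2 = m + 3 by ring] at h
      exact h
    push_cast
    rw [show m + 2 + 3 = m + 5 by ring, show m + 1 + 1 = m + 2 by ring,
      show m + 1 + 2 = m + 3 by ring]
    simp only [Finset.sum_range_one, Nat.cast_zero, Nat.mul_zero, Nat.sub_zero, cheb]
    linear_combination x m * h1 + u * hb m + hb1 - x (m + 1) * ha' m
  | more n H1 H2 =>
    have H1 := H1 m
    have H2 := H2 m
    push_cast at H1 H2 ⊢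
    rw [show m + 2 * ((n : ℤ) + 1) + 3 = m + 2 * (n : ℤ) + 5 by ring,
      show m + ((n : ℤ) + 1) + 1 = m + (n : ℤ) + 2 by ring,
      show m + ((n : ℤ) + 1) + 2 = m + (n : ℤ) + 3 by ring] at H2
    rw [show m + 2 * ((n : ℤ) + 2) + 3 = m + 2 * (n : ℤ) + 7 by ring,
      show m + ((n : ℤ) + 2) + 1 = m + (n : ℤ) + 3 by ring,
      show m + ((n : ℤ) + 2) + 2 = m + (n : ℤ) + 4 by ring]
    have R1 : x (m + 2 * (n : ℤ) + 7) = u * x (m + 2 * (n : ℤ) + 5) - x (m + 2 * (n : ℤ) + 3) := by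
      have h := ha' (m + 2 * (n : ℤ) + 3)
      rw [show m + 2 * (n : ℤ) + 3 + 4 = m + 2 * (n : ℤ) + 7 by ring,
        show m + 2 * (n : ℤ) + 3 + 2 = m + 2 * (n : ℤ) + 5 by ring] at h
      exact h
    have R2 : x (m + (n : ℤ) + 4) = u * x (m + (n : ℤ) + 2) - x (m + (n : ℤ)) := ha' (m + (n : ℤ))
    have R3 : x (m + (n : ℤ)) * x (m + (n : ℤ) + 3)
        = x (m + (n : ℤ) + 1) * x (m + (n : ℤ) + 2) + 1 := hb (m + (n : ℤ))
    have S := Srec u n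
    push_cast at S
    linear_combination x m * R1 + u * H2 - H1 - x (m + (n : ℤ) + 3) * R2 + R3 - S
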